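/- Let (W_i)_{i≥1} be a sequence of independent, identically distributed random variables taking values in the integers ℤ, defined on a probability space (Ω, F, P). Let r be a positive integer with P(W_1 = r) > 0, and set S_t = Σ_{i=1}^t W_i for t ∈ ℕ₀ (so S_0 = 0). Then for every n ∈ ℕ and every integer j ≥ 1, P( r + S_t > 0 for all t ∈ {1,…,n} and r + S_n = j ) ≤ P(W_1 = r)^{-1} · (j/(n+1)) · P(S_{n+1} = j). -/

import Mathlib

open MeasureTheory ProbabilityTheory Finset
open scoped ProbabilityTheory
open scoped ENNReal
open Fin.NatCast


lemma cycle_lemma {m : ℕ} [NeZero m] (x : Fin m → ℤ) (j : ℤ) (hj : 1 ≤ j)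
    (hsum : ∑ i, x i = j) (gs : Finset (Fin m))
    (hgoodall : ∀ k ∈ gs, ∀ t ∈ Finset.Icc 1 m, 0 < ∑ i ∈ Finset.range t, x (k + (i : Fin m))) :
    ((gs.card : ℤ) : ℤ) ≤ j := by
  set s : ℕ → ℤ := fun t => ∑ i ∈ Finset.range t, x ((i : ℕ) : Fin m) with hs_def
  have key : ∀ v : ℕ, s (v + 1) = s v + x ((v : ℕ) : Fin m) := fun v =>
    Finset.sum_range_succ _ v
  have h0 : s 0 = 0 := by simp [hs_def]
  have hper : ∀ i : ℕ, x (((i + m : ℕ)) : Fin m) = x ((i : ℕ) : Fin m) := by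
    intro i
    congr 1
    push_cast
    simp
  have hsm : s m = j := by
    rw [hs_def]
    simp only
    rw [← Fin.sum_univ_eq_sum_range (fun i => x ((i : ℕ) : Fin m)) m, ← hsum]
    exact Finset.sum_congr rfl fun i _ => by rw [Fin.cast_val_eq_self]
  have hs : ∀ t, s (t + m) = s t + j := by
    intro t
    induction t with
    | zero => rw [Nat.zero_add, hsm, h0, zero_add]
    | succ u ih =>
      calc s (u + 1 + m) = s ((u + m) + 1) := by rw [Nat.add_right_comm]
        _ = s (u + m) + x (((u + m : ℕ)) : Fin m) := key _
        _ = s u + j + x ((u : ℕ) : Fin m) := by rw [ih, hper]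
        _ = s (u + 1) + j := by rw [key u]; ring
  have hrot : ∀ (k t : ℕ), ∑ i ∈ Finset.range t, x (((k + i : ℕ)) : Fin m) = s (k + t) - s k := by
    intro k t
    induction t with
    | zero => simp
    | succ u ih =>
      rw [Finset.sum_range_succ, ih, show k + (u + 1) = (k + u) + 1 from rfl, key (k + u)]
      ring
  have hgood : ∀ K : Fin m, K ∈ gs → ∀ t ∈ Finset.Icc 1 m, s K.val < s (K.val + t) := by
    intro K hK t ht
    have h2 := hgoodall K hK t ht
    have heq : ∑ i ∈ Finset.range t, x (K + (i : Fin m))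
        = ∑ i ∈ Finset.range t, x (((K.val + i : ℕ)) : Fin m) := by
      refine Finset.sum_congr rfl fun i _ => ?_
      congr 1
      push_cast
      rfl
    rw [heq, hrot] at h2
    omega
  rcases Finset.eq_empty_or_nonempty gs with hGe | hGne
  · rw [hGe]; simp; omega
  · set k₀ := gs.min' hGne with hk0
    have hk0G : k₀ ∈ gs := gs.min'_mem hGne
    have mono : ∀ K ∈ gs, ∀ K' ∈ gs, K < K' → s K.val < s K'.val := by
      intro K hK K' hK' hlt
      have hv : K.val < K'.val := hlt
      have h1 : (K'.val - K.val) ∈ Finset.Icc 1 m := by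
        simp only [Finset.mem_Icc]
        have := K'.isLt
        omega
      have := hgood K hK _ h1
      have heq : K.val + (K'.val - K.val) = K'.val := by omega
      rwa [heq] at this
    have hltj : ∀ K ∈ gs, ∀ K' ∈ gs, s K'.val < s K.val + j := by
      intro K hK K' hK'
      rcases lt_or_ge K'.val K.val with h | h
      · have := mono K' hK' K hK (Fin.lt_def.mpr h)
        omega
      · have h1 : (K.val + m - K'.val) ∈ Finset.Icc 1 m := by
          simp only [Finset.mem_Icc]
          have := K'.isLt
          omega
        have h2 := hgood K' hK' _ h1
        have heq : K'.val + (K.val + m - K'.val) = K.val + m := by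
          have := K'.isLt
          omega
        rw [heq, hs] at h2
        exact h2
    have hmap : ∀ K ∈ gs, s K.val ∈ Finset.Ico (s k₀.val) (s k₀.val + j) := by
      intro K hK
      rw [Finset.mem_Ico]
      constructor
      · rcases eq_or_lt_of_le (gs.min'_le K hK) with h | h
        · rw [← h]
        · exact (mono k₀ hk0G K hK h).le
      · exact hltj k₀ hk0G K hK
    have hinj : Set.InjOn (fun K : Fin m => s K.val) (gs : Set (Fin m)) := by
      intro K hK K' hK' heq
      by_contra hne
      rcases lt_or_gt_of_ne hne with h | h
      · exact absurd heq (ne_of_lt (mono K hK K' hK' h))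
      · exact absurd heq.symm (ne_of_lt (mono K' hK' K hK h))
    have hcard := Finset.card_le_card_of_injOn _ hmap hinj
    have hIco : (Finset.Ico (s k₀.val) (s k₀.val + j)).card = j.toNat := by
      rw [Int.card_Ico]
      simp
    rw [hIco] at hcard
    calc (gs.card : ℤ) ≤ (j.toNat : ℤ) := by exact_mod_cast hcard
      _ = j := Int.toNat_of_nonneg (by omega)

lemma joint_law_pi {Ω : Type*} [MeasureSpace Ω] [IsProbabilityMeasure (ℙ : Measure Ω)]
    (W : ℕ → Ω → ℤ) (hWmeas : ∀ i, Measurable (W i))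
    (hindep : iIndepFun W ℙ)
    (hident : ∀ i, IdentDistrib (W i) (W 0) ℙ ℙ) (m : ℕ) :
    Measure.map (fun ω (i : Fin m) => W i.val ω) ℙ
      = Measure.pi (fun _ : Fin m => Measure.map (W 0) ℙ) := by
  have hμ : ∀ (i : ℕ) (t : Set ℤ), ℙ (W i ⁻¹' t) = (Measure.map (W 0) ℙ) t := by
    intro i t
    rw [← (hident i).map_eq, Measure.map_apply (hWmeas i) (Set.to_countable t).measurableSet]
  refine (Measure.pi_eq fun s _ => ?_).symm
  rw [Measure.map_apply (measurable_pi_lambda (fun ω (i : Fin m) => W i.val ω) (fun i => hWmeas i.val))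
    (Set.to_countable _).measurableSet]
  classical
  set s' : ℕ → Set ℤ := fun i => if h : i < m then s ⟨i, h⟩ else Set.univ with hs'
  have hpre : (fun ω (i : Fin m) => W i.val ω) ⁻¹' Set.pi Set.univ s
      = ⋂ i ∈ Finset.range m, W i ⁻¹' s' i := by
    ext ω
    simp only [Set.mem_preimage, Set.mem_pi, Set.mem_univ, forall_true_left, Set.mem_iInter,
      Finset.mem_range, hs']
    constructor
    · intro h i hi
      rw [dif_pos hi]
      exact h ⟨i, hi⟩
    · intro h i
      have := h i.val i.isLt
      rw [dif_pos i.isLt] at this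
      exact this
  rw [hpre, hindep.measure_inter_preimage_eq_mul (Finset.range m)
    (fun i _ => (Set.to_countable _).measurableSet)]
  rw [← Fin.prod_univ_eq_prod_range (fun i => ℙ (W i ⁻¹' s' i)) m]
  refine Finset.prod_congr rfl fun i _ => ?_
  rw [hμ i.val (s' i.val), hs']
  simp only
  rw [dif_pos i.isLt]


/-- ballot-type estimate, Lemma 3.1 of the paper.
Let `(W_i)` be i.i.d. ℤ-valued random variables, let `r ∈ ℕ` with `r ≥ 1` and
`P(W₁ = r) > 0`, and let `S_t = Σ_{i=1}^t W_i`. Then for every `n ∈ ℕ` and every integer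
`j ≥ 1`,
`P(r + S_t > 0 ∀ t ∈ [n], r + S_n = j) ≤ P(W₁ = r)⁻¹·(j/(n+1))·P(S_{n+1} = j)`. -/
theorem ballot_type_estimate {Ω : Type*} [MeasureSpace Ω]
    [IsProbabilityMeasure (ℙ : Measure Ω)]
    (W : ℕ → Ω → ℤ) (hWmeas : ∀ i, Measurable (W i))
    (hindep : iIndepFun W ℙ)
    (hident : ∀ i, IdentDistrib (W i) (W 0) ℙ ℙ)
    (r : ℕ) (hr : 1 ≤ r) (hrpos : 0 < (ℙ {ω | W 0 ω = (r : ℤ)}).toReal)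
    (n : ℕ) (j : ℤ) (hj : 1 ≤ j) :
    (ℙ {ω | (∀ t ∈ Finset.Icc 1 n, 0 < (r : ℤ) + ∑ i ∈ Finset.range t, W i ω) ∧
        (r : ℤ) + ∑ i ∈ Finset.range n, W i ω = j}).toReal ≤
      ((ℙ {ω | W 0 ω = (r : ℤ)}).toReal)⁻¹ * ((j : ℝ) / ((n : ℝ) + 1)) *
        (ℙ {ω | ∑ i ∈ Finset.range (n + 1), W i ω = j}).toReal := by
  
  classical
  set μ : Measure ℤ := Measure.map (W 0) ℙ with hμdef
  have hμ : ∀ (i : ℕ) (t : Set ℤ), ℙ (W i ⁻¹' t) = μ t := by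
    intro i t
    rw [hμdef, ← (hident i).map_eq, Measure.map_apply (hWmeas i)
      (Set.to_countable t).measurableSet]
  haveI : IsProbabilityMeasure μ := Measure.isProbabilityMeasure_map (hWmeas 0).aemeasurable
  set m := n + 1 with hm
  haveI : NeZero m := ⟨Nat.succ_ne_zero n⟩
  set V : Ω → (Fin m → ℤ) := fun ω i => W i.val ω with hV
  have hVmeas : Measurable V := measurable_pi_lambda _ (fun i => hWmeas i.val)
  set ν : Measure (Fin m → ℤ) := Measure.pi (fun _ => μ) with hν
  have hlaw : Measure.map V ℙ = ν := joint_law_pi W hWmeas hindep hident m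
  have htrans : ∀ E : Set (Fin m → ℤ), ℙ (V ⁻¹' E) = ν E := by
    intro E
    rw [← hlaw]
    exact (Measure.map_apply hVmeas (Set.to_countable E).measurableSet).symm
  set A : Set Ω := {ω | (∀ t ∈ Finset.Icc 1 n, 0 < (r : ℤ) + ∑ i ∈ Finset.range t, W i ω) ∧
        (r : ℤ) + ∑ i ∈ Finset.range n, W i ω = j} with hA
  set G : Fin m → Set (Fin m → ℤ) := fun k =>
    {x | (∀ t ∈ Finset.Icc 1 m, 0 < ∑ i ∈ Finset.range t, x (k + (i : Fin m))) ∧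
      ∑ i, x i = j} with hG
  set D : Set (Fin m → ℤ) := {x | ∑ i, x i = j} with hD
  -- Step I: independence
  have hsum_if : ∀ (ω : Ω) (t : ℕ), t ≤ n →
      ∑ i ∈ Finset.range t, (if h : i ∈ Finset.range n then W i ω else 0)
        = ∑ i ∈ Finset.range t, W i ω := by
    intro ω t ht
    exact Finset.sum_congr rfl fun i hi =>
      dif_pos (Finset.mem_range.mpr (lt_of_lt_of_le (Finset.mem_range.mp hi) ht))
  have hindepAB : ℙ (A ∩ {ω | W n ω = (r : ℤ)}) = ℙ A * ℙ {ω | W n ω = (r : ℤ)} := by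
    have hST : Disjoint (Finset.range n) ({n} : Finset ℕ) := by simp
    have hIF := hindep.indepFun_finset (Finset.range n) ({n} : Finset ℕ) hST hWmeas
    rw [indepFun_iff_measure_inter_preimage_eq_mul] at hIF
    set E : Set (↥(Finset.range n) → ℤ) :=
      {g | (∀ t ∈ Finset.Icc 1 n, 0 < (r : ℤ) +
          ∑ i ∈ Finset.range t, (if h : i ∈ Finset.range n then g ⟨i, h⟩ else 0)) ∧
        (r : ℤ) + ∑ i ∈ Finset.range n, (if h : i ∈ Finset.range n then g ⟨i, h⟩ else 0) = j}
      with hE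
    set F : Set (↥({n} : Finset ℕ) → ℤ) :=
      {g | g ⟨n, Finset.mem_singleton_self n⟩ = (r : ℤ)} with hF
    have key := hIF E F (Set.to_countable E).measurableSet (Set.to_countable F).measurableSet
    have hAeq : (fun a (i : ↥(Finset.range n)) => W i.val a) ⁻¹' E = A := by
      ext ω
      simp only [Set.mem_preimage, hE, Set.mem_setOf_eq, hA]
      constructor
      · rintro ⟨h1, h2⟩
        refine ⟨fun t ht => ?_, ?_⟩
        · have := h1 t ht
          rwa [hsum_if ω t (Finset.mem_Icc.mp ht).2] at this
        · rwa [hsum_if ω n le_rfl] at h2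
      · rintro ⟨h1, h2⟩
        refine ⟨fun t ht => ?_, ?_⟩
        · rw [hsum_if ω t (Finset.mem_Icc.mp ht).2]
          exact h1 t ht
        · rw [hsum_if ω n le_rfl]
          exact h2
    have hBeq : (fun a (i : ↥({n} : Finset ℕ)) => W i.val a) ⁻¹' F
        = {ω | W n ω = (r : ℤ)} := by
      ext ω
      simp only [Set.mem_preimage, hF, Set.mem_setOf_eq]
    rw [hAeq, hBeq] at key
    exact key
  -- identical distribution facts
  have hWnr : ℙ {ω | W n ω = (r : ℤ)} = μ {(r : ℤ)} := hμ n {(r : ℤ)}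
  have hW0r : ℙ {ω | W 0 ω = (r : ℤ)} = μ {(r : ℤ)} := hμ 0 {(r : ℤ)}
  -- Step III: inclusion into rotated event
  have hsub : A ∩ {ω | W n ω = (r : ℤ)} ⊆ V ⁻¹' (G (Fin.last n)) := by
    rintro ω ⟨⟨h1, h2⟩, hWn⟩
    simp only [Set.mem_setOf_eq] at hWn
    simp only [Set.mem_preimage, hG, Set.mem_setOf_eq]
    constructor
    · intro t ht
      rw [Finset.mem_Icc] at ht
      obtain ⟨u, rfl⟩ : ∃ u, t = u + 1 := ⟨t - 1, by omega⟩
      have hun : u ≤ n := by omega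
      rw [Finset.sum_range_succ']
      have hf0 : V ω (Fin.last n + ((0 : ℕ) : Fin m)) = (r : ℤ) := by
        have : Fin.last n + ((0 : ℕ) : Fin m) = Fin.last n := by
          simp
        rw [this, hV]
        simp only [Fin.val_last]
        exact hWn
      have hfs : ∀ i ∈ Finset.range u, V ω (Fin.last n + ((i + 1 : ℕ) : Fin m)) = W i ω := by
        intro i hi
        have hilt : i < m := by
          have := Finset.mem_range.mp hi
          omega
        have heq : Fin.last n + ((i + 1 : ℕ) : Fin m) = ((i : ℕ) : Fin m) := by
          push_cast
          rw [add_comm ((i : ℕ) : Fin m) 1, ← add_assoc, Fin.last_add_one, zero_add]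
        rw [heq, hV]
        simp only
        rw [Fin.val_cast_of_lt hilt]
      rw [Finset.sum_congr rfl hfs, hf0]
      rcases Nat.eq_zero_or_pos u with hu | hu
      · subst hu
        simp only [Finset.range_zero, Finset.sum_empty, zero_add]
        exact_mod_cast Nat.pos_of_ne_zero (by omega)
      · have := h1 u (Finset.mem_Icc.mpr ⟨hu, hun⟩)
        linarith
    · have hsv : ∑ i : Fin m, V ω i = ∑ i ∈ Finset.range m, W i ω := by
        simp only [hV]
        exact Fin.sum_univ_eq_sum_range (fun i => W i ω) m
      rw [hsv, hm, Finset.sum_range_succ, hWn]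
      linarith
  -- Step IV: rotation invariance
  have hrotinv : ∀ k : Fin m, ν (G k) = ν (G 0) := by
    intro k
    have hmp := MeasureTheory.measurePreserving_piCongrLeft (fun _ : Fin m => μ)
      ((Equiv.addLeft k).symm)
    set T := MeasurableEquiv.piCongrLeft (fun _ : Fin m => ℤ) ((Equiv.addLeft k).symm) with hT
    have hTapp : ∀ (x : Fin m → ℤ) (b : Fin m), T x b = x (k + b) := by
      intro x b
      have h1 := Equiv.piCongrLeft_apply_apply (P := fun _ : Fin m => ℤ)
        (e := (Equiv.addLeft k).symm) x ((Equiv.addLeft k) b)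
      simp only [Equiv.symm_apply_apply] at h1
      show (MeasurableEquiv.piCongrLeft (fun _ : Fin m => ℤ) ((Equiv.addLeft k).symm)) x b
          = x (k + b)
      rw [MeasurableEquiv.coe_piCongrLeft]
      exact h1
    have hpre : ⇑T ⁻¹' (G 0) = G k := by
      ext x
      simp only [Set.mem_preimage, hG, Set.mem_setOf_eq]
      constructor
      · rintro ⟨c1, c2⟩
        refine ⟨fun t ht => ?_, ?_⟩
        · have := c1 t ht
          calc (0:ℤ) < ∑ i ∈ Finset.range t, T x (0 + (i : Fin m)) := this
            _ = ∑ i ∈ Finset.range t, x (k + (i : Fin m)) := by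
              refine Finset.sum_congr rfl fun i _ => ?_
              rw [hTapp, zero_add]
        · have : ∑ i, T x i = ∑ i, x (k + i) := by
            refine Finset.sum_congr rfl fun i _ => hTapp x i
          rw [this] at c2
          have hsc : ∑ i : Fin m, x (k + i) = ∑ i : Fin m, x i :=
            Equiv.sum_comp (Equiv.addLeft k) x
          rwa [hsc] at c2
      · rintro ⟨c1, c2⟩
        refine ⟨fun t ht => ?_, ?_⟩
        · have := c1 t ht
          calc (0:ℤ) < ∑ i ∈ Finset.range t, x (k + (i : Fin m)) := this
            _ = ∑ i ∈ Finset.range t, T x (0 + (i : Fin m)) := by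
              refine Finset.sum_congr rfl fun i _ => ?_
              rw [hTapp, zero_add]
        · have : ∑ i, T x i = ∑ i, x (k + i) := by
            refine Finset.sum_congr rfl fun i _ => hTapp x i
          rw [this]
          have hsc : ∑ i : Fin m, x (k + i) = ∑ i : Fin m, x i :=
            Equiv.sum_comp (Equiv.addLeft k) x
          rwa [hsc]
    calc ν (G k) = ν (⇑T ⁻¹' (G 0)) := by rw [hpre]
      _ = ν (G 0) := hmp.measure_preimage (Set.to_countable _).measurableSet.nullMeasurableSet
  have hall : ∀ k : Fin m, ν (G k) = ν (G (Fin.last n)) := fun k =>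
    (hrotinv k).trans (hrotinv (Fin.last n)).symm
  -- Step V: counting bound
  have hGD : ∀ k, G k ⊆ D := fun k x hx => hx.2
  set J : ℕ := j.toNat with hJ
  have hcount : ∀ x ∈ D, ((Finset.univ.filter (fun k : Fin m => x ∈ G k)).card : ℝ≥0∞)
      ≤ (J : ℝ≥0∞) := by
    intro x hx
    have hcl := cycle_lemma (m := m) x j hj hx
      (Finset.univ.filter (fun k : Fin m => x ∈ G k))
      (fun k hk => ((Finset.mem_filter.mp hk).2).1)
    have hnat : (Finset.univ.filter (fun k : Fin m => x ∈ G k)).card ≤ J := by omega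
    exact_mod_cast hnat
  have hsum_bound : ∑ k : Fin m, ν (G k) ≤ (J : ℝ≥0∞) * ν D := by
    have meas1 : ∀ k : Fin m, Measurable ((G k).indicator (fun _ => (1 : ℝ≥0∞))) :=
      fun k => measurable_of_countable _
    calc ∑ k : Fin m, ν (G k)
        = ∑ k : Fin m, ∫⁻ x, (G k).indicator (fun _ => (1 : ℝ≥0∞)) x ∂ν := by
          refine Finset.sum_congr rfl fun k _ => ?_
          rw [lintegral_indicator (Set.to_countable _).measurableSet, setLIntegral_one]
      _ = ∫⁻ x, ∑ k : Fin m, (G k).indicator (fun _ => (1 : ℝ≥0∞)) x ∂ν :=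
          (lintegral_finset_sum _ (fun k _ => meas1 k)).symm
      _ ≤ ∫⁻ x, D.indicator (fun _ => (J : ℝ≥0∞)) x ∂ν := by
          apply lintegral_mono
          intro x
          show ∑ k : Fin m, (G k).indicator (fun _ => (1 : ℝ≥0∞)) x
              ≤ D.indicator (fun _ => (J : ℝ≥0∞)) x
          by_cases hx : x ∈ D
          · rw [Set.indicator_of_mem hx]
            have heq : ∑ k : Fin m, (G k).indicator (fun _ => (1 : ℝ≥0∞)) x
                = ((Finset.univ.filter (fun k : Fin m => x ∈ G k)).card : ℝ≥0∞) := by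
              simp only [Set.indicator_apply]
              rw [Finset.sum_boole]
            rw [heq]
            exact hcount x hx
          · have hz : ∀ k : Fin m, (G k).indicator (fun _ => (1 : ℝ≥0∞)) x = 0 := fun k =>
              Set.indicator_of_notMem (fun h => hx (hGD k h)) _
            simp only [hz, Finset.sum_const_zero]
            exact zero_le
      _ = (J : ℝ≥0∞) * ν D :=
          lintegral_indicator_const (Set.to_countable _).measurableSet _
  have hstep : (m : ℝ≥0∞) * ν (G (Fin.last n)) ≤ (J : ℝ≥0∞) * ν D := by
    calc (m : ℝ≥0∞) * ν (G (Fin.last n)) = ∑ _k : Fin m, ν (G (Fin.last n)) := by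
          rw [Finset.sum_const, Finset.card_univ, Fintype.card_fin, nsmul_eq_mul]
      _ = ∑ k : Fin m, ν (G k) := Finset.sum_congr rfl fun k _ => (hall k).symm
      _ ≤ (J : ℝ≥0∞) * ν D := hsum_bound
  -- Assemble in ℝ≥0∞
  have h1 : ℙ A * μ {(r : ℤ)} ≤ ν (G (Fin.last n)) := by
    rw [← hWnr, ← hindepAB]
    calc ℙ (A ∩ {ω | W n ω = (r : ℤ)}) ≤ ℙ (V ⁻¹' (G (Fin.last n))) := measure_mono hsub
      _ = ν (G (Fin.last n)) := htrans _
  have hDeq : ν D = ℙ {ω | ∑ i ∈ Finset.range (n + 1), W i ω = j} := by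
    rw [← htrans D]
    congr 1
    ext ω
    simp only [Set.mem_preimage, hD, Set.mem_setOf_eq, hV]
    rw [Fin.sum_univ_eq_sum_range (fun i => W i ω) m]
  have hbig : ℙ A * μ {(r : ℤ)} * (m : ℝ≥0∞)
      ≤ (J : ℝ≥0∞) * ℙ {ω | ∑ i ∈ Finset.range (n + 1), W i ω = j} := by
    calc ℙ A * μ {(r : ℤ)} * (m : ℝ≥0∞) ≤ ν (G (Fin.last n)) * (m : ℝ≥0∞) := by
          exact mul_le_mul_left h1 _
      _ = (m : ℝ≥0∞) * ν (G (Fin.last n)) := mul_comm _ _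
      _ ≤ (J : ℝ≥0∞) * ν D := hstep
      _ = (J : ℝ≥0∞) * ℙ {ω | ∑ i ∈ Finset.range (n + 1), W i ω = j} := by rw [hDeq]
  -- Convert to ℝ
  set a : ℝ := (ℙ A).toReal with ha
  set b : ℝ := (μ {(r : ℤ)}).toReal with hb
  set d : ℝ := (ℙ {ω | ∑ i ∈ Finset.range (n + 1), W i ω = j}).toReal with hd
  have hfin1 : ℙ A ≠ ⊤ := measure_ne_top _ _
  have hfin2 : μ {(r : ℤ)} ≠ ⊤ := measure_ne_top _ _
  have hfin3 : ℙ {ω | ∑ i ∈ Finset.range (n + 1), W i ω = j} ≠ ⊤ := measure_ne_top _ _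
  have hreal : a * b * (m : ℝ) ≤ (J : ℝ) * d := by
    have hLne : ℙ A * μ {(r : ℤ)} * (m : ℝ≥0∞) ≠ ⊤ :=
      ENNReal.mul_ne_top (ENNReal.mul_ne_top hfin1 hfin2) (ENNReal.natCast_ne_top m)
    have hRne : (J : ℝ≥0∞) * ℙ {ω | ∑ i ∈ Finset.range (n + 1), W i ω = j} ≠ ⊤ :=
      ENNReal.mul_ne_top (ENNReal.natCast_ne_top J) hfin3
    have := ENNReal.toReal_mono hRne hbig
    rw [ENNReal.toReal_mul, ENNReal.toReal_mul, ENNReal.toReal_mul] at this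
    simpa using this
  have hbpos : 0 < b := by rwa [hW0r] at hrpos
  have hmpos : (0 : ℝ) < (m : ℝ) := by positivity
  have hJj : (J : ℝ) = (j : ℝ) := by
    rw [hJ]
    exact_mod_cast Int.toNat_of_nonneg (by omega)
  have hdnn : 0 ≤ d := ENNReal.toReal_nonneg
  -- final algebra
  rw [hW0r]
  show a ≤ b⁻¹ * ((j : ℝ) / ((n : ℝ) + 1)) * d
  have hmn : ((n : ℝ) + 1) = (m : ℝ) := by
    rw [hm]
    push_cast
    ring
  rw [hmn]
  have h2 : a ≤ ((j : ℝ) * d) / (b * (m : ℝ)) := by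
    rw [le_div_iff₀ (by positivity)]
    calc a * (b * (m : ℝ)) = a * b * (m : ℝ) := by ring
      _ ≤ (J : ℝ) * d := hreal
      _ = (j : ℝ) * d := by rw [hJj]
  calc a ≤ ((j : ℝ) * d) / (b * (m : ℝ)) := h2
    _ = b⁻¹ * ((j : ℝ) / (m : ℝ)) * d := by
      field_simp
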